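/- Suppose τ₀, τ₁, τ₂ ∈ H satisfy ⟨τ₀,τ₀⟩ + ⟨τ₁,τ₁⟩ + ⟨τ₂,τ₂⟩ = 1, that Φ₀₀, Φ₀₁, Φ₁₀, Φ₁₁ are all unit vectors, and that ⟨Φ₀₀, Φ₁₀⟩ = 0. Then ⟨τ₀,τ₀⟩ = ⟨τ₁,τ₁⟩ = ⟨τ₂,τ₂⟩ = 1/3. -/

import Mathlib

open scoped BigOperators ComplexConjugate

variable {H : Type*} [NormedAddCommGroup H] [InnerProductSpace ℂ H]

/-- The primitive cube root of unity `ω = e^{2πi/3}`. -/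
noncomputable def ω : ℂ := Complex.exp (2 * Real.pi * Complex.I / 3)

/-- `|v_j⟩ = (1/√3)(i|0⟩ + ω^{-j}|1⟩ + ω^{-2j}|2⟩)` in `ℂ³`. -/
noncomputable def v (j : Fin 3) : Fin 3 → ℂ := fun k =>
  ((Real.sqrt 3 : ℂ))⁻¹ * (if k = 0 then Complex.I else ω ^ (-((j : ℕ) * (k : ℕ) : ℤ)))

/-- `|v_j'⟩ = (1/√3)(|0⟩ + ω^{-j}|1⟩ + i ω^{-2j}|2⟩)` in `ℂ³`. -/
noncomputable def v' (j : Fin 3) : Fin 3 → ℂ := fun k =>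
  ((Real.sqrt 3 : ℂ))⁻¹ * (if k = 2 then Complex.I else 1) * ω ^ (-((j : ℕ) * (k : ℕ) : ℤ))

/-- The inner product on `ℂ³ ⊗ H`, viewed as triples of elements of `H`:
`⟨x, y⟩ = ∑ₖ ⟨xₖ, yₖ⟩` (conjugate-linear in the first argument). -/
noncomputable def ip (x y : Fin 3 → H) : ℂ := ∑ k, (inner ℂ (x k) (y k) : ℂ)

/-- `Φ₀₀ = √2 [ |v₀⟩⊗τ₀ − ½|v₁⟩⊗τ₁ − ½|v₂⟩⊗τ₂ ]` in `ℂ³ ⊗ H`. -/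
noncomputable def Phi00 (τ₀ τ₁ τ₂ : H) : Fin 3 → H := fun k =>
  (Real.sqrt 2 : ℂ) • (v 0 k • τ₀ - ((1/2 : ℂ) * v 1 k) • τ₁ - ((1/2 : ℂ) * v 2 k) • τ₂)

/-- `Φ₀₁ = √2 [ −(√3/2)|v₁'⟩⊗τ₁ + (√3/2)|v₂'⟩⊗τ₂ ]` in `ℂ³ ⊗ H`. -/
noncomputable def Phi01 (τ₁ τ₂ : H) : Fin 3 → H := fun k =>
  (Real.sqrt 2 : ℂ) • ((-((Real.sqrt 3 : ℂ) / 2) * v' 1 k) • τ₁ +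
    (((Real.sqrt 3 : ℂ) / 2) * v' 2 k) • τ₂)

/-- `Φ₁₀ = √2 [ (√3/2)|v₁⟩⊗τ₁ − (√3/2)|v₂⟩⊗τ₂ ]` in `ℂ³ ⊗ H`. -/
noncomputable def Phi10 (τ₁ τ₂ : H) : Fin 3 → H := fun k =>
  (Real.sqrt 2 : ℂ) • ((((Real.sqrt 3 : ℂ) / 2) * v 1 k) • τ₁ -
    (((Real.sqrt 3 : ℂ) / 2) * v 2 k) • τ₂)

/-- `Φ₁₁ = √2 [ |v₀'⟩⊗τ₀ − ½|v₁'⟩⊗τ₁ − ½|v₂'⟩⊗τ₂ ]` in `ℂ³ ⊗ H`. -/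
noncomputable def Phi11 (τ₀ τ₁ τ₂ : H) : Fin 3 → H := fun k =>
  (Real.sqrt 2 : ℂ) • (v' 0 k • τ₀ - ((1/2 : ℂ) * v' 1 k) • τ₁ - ((1/2 : ℂ) * v' 2 k) • τ₂)


section AuxOmega

lemma hprim : IsPrimitiveRoot ω 3 := by
  have := Complex.isPrimitiveRoot_exp 3 (by norm_num)
  simpa [ω] using this

lemma hω3 : ω ^ 3 = 1 := hprim.pow_eq_one

lemma hωne : ω ≠ 0 := by intro h; have := hω3; rw [h] at this; simp at this

lemma hωsum : 1 + ω + ω ^ 2 = 0 := by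
  have h1 : ω ≠ 1 := hprim.ne_one (by norm_num)
  have h : (ω - 1) * (1 + ω + ω ^ 2) = ω ^ 3 - 1 := by ring
  rw [hω3] at h
  simp at h
  rcases h with h | h
  · exact absurd (by linear_combination h : ω = 1) h1
  · exact h

lemma habs : ‖ω‖ = 1 := by rw [ω]; simp [Complex.norm_exp]

lemma hconj : (starRingEnd ℂ) ω = ω ^ 2 := by
  have h : ω * (starRingEnd ℂ) ω = 1 := by
    rw [Complex.mul_conj]; norm_cast
    rw [Complex.normSq_eq_norm_sq, habs]; norm_num
  have h2 : ω * (ω ^ 2) = 1 := by rw [← hω3]; ring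
  exact mul_left_cancel₀ hωne (h.trans h2.symm)

lemma hi1 : ω⁻¹ = ω ^ 2 := inv_eq_of_mul_eq_one_right (by linear_combination hω3)
lemma hi2 : (ω ^ 2)⁻¹ = ω := inv_eq_of_mul_eq_one_right (by linear_combination hω3)
lemma hi4 : (ω ^ 4)⁻¹ = ω ^ 2 := inv_eq_of_mul_eq_one_right (by linear_combination (1 + ω^3) * hω3)
lemma hi22 : ((ω ^ 2) ^ 2)⁻¹ = ω ^ 2 := inv_eq_of_mul_eq_one_right (by linear_combination (1 + ω^3) * hω3)

lemma hy3 : ((Real.sqrt 3 : ℝ) : ℂ) ^ 2 = 3 := by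
  norm_cast; rw [Real.sq_sqrt]; norm_num

lemma hx2 : ((Real.sqrt 2 : ℝ) : ℂ) ^ 2 = 2 := by
  norm_cast; rw [Real.sq_sqrt]; norm_num

lemma h3inv : ((Real.sqrt 3 : ℂ))⁻¹ = (Real.sqrt 3 : ℂ) / 3 :=
  inv_eq_of_mul_eq_one_right (by linear_combination hy3 / 3)

end AuxOmega

set_option maxHeartbeats 2000000

/-- If `⟨τ₀,τ₀⟩+⟨τ₁,τ₁⟩+⟨τ₂,τ₂⟩ = 1`, the four vectors `Φᵢⱼ` are unit
vectors, and `⟨Φ₀₀,Φ₁₀⟩ = 0`, then `⟨τ₀,τ₀⟩ = ⟨τ₁,τ₁⟩ = ⟨τ₂,τ₂⟩ = 1/3`. -/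
theorem tau_norms_eq_third {H : Type*} [NormedAddCommGroup H] [InnerProductSpace ℂ H]
    (τ₀ τ₁ τ₂ : H)
    (hnorm : (inner ℂ τ₀ τ₀ : ℂ) + inner ℂ τ₁ τ₁ + inner ℂ τ₂ τ₂ = 1)
    (h00 : ip (Phi00 τ₀ τ₁ τ₂) (Phi00 τ₀ τ₁ τ₂) = 1)
    (h01 : ip (Phi01 τ₁ τ₂) (Phi01 τ₁ τ₂) = 1)
    (h10 : ip (Phi10 τ₁ τ₂) (Phi10 τ₁ τ₂) = 1)
    (h11 : ip (Phi11 τ₀ τ₁ τ₂) (Phi11 τ₀ τ₁ τ₂) = 1)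
    (horth : ip (Phi00 τ₀ τ₁ τ₂) (Phi10 τ₁ τ₂) = 0) :
    (inner ℂ τ₀ τ₀ : ℂ) = 1/3 ∧ (inner ℂ τ₁ τ₁ : ℂ) = 1/3 ∧ (inner ℂ τ₂ τ₂ : ℂ) = 1/3 := by
  simp only [ip, Phi00, Phi10, v, Fin.sum_univ_three, inner_smul_left, inner_smul_right,
    inner_sub_left, inner_sub_right, map_mul, map_inv₀, map_div₀, Complex.conj_I,
    Complex.conj_ofReal, map_ofNat, hconj] at h10 horth
  norm_num [Fin.ext_iff, hconj, zpow_neg, zpow_ofNat, hi1, hi2, hi4, hi22, h3inv] at h10 horth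
  have e1 : ((‖τ₁‖ : ℝ) : ℂ) ^ 2 = inner ℂ τ₁ τ₁ := (inner_self_eq_norm_sq_to_K τ₁).symm
  have e2 : ((‖τ₂‖ : ℝ) : ℂ) ^ 2 = inner ℂ τ₂ τ₂ := (inner_self_eq_norm_sq_to_K τ₂).symm
  rw [e1, e2] at h10 horth
  have key1 : (inner ℂ τ₁ τ₁ : ℂ) + (inner ℂ τ₂ τ₂ : ℂ) = 2/3 := by
    linear_combination (2/3 : ℂ) * h10 + ((-1/2 : ℂ)*(inner ℂ τ₂ τ₂ : ℂ) + (-1/2 : ℂ)*(inner ℂ τ₁ τ₁ : ℂ)) * hx2 + ((-1/18 : ℂ)*((Real.sqrt 2 : ℝ) : ℂ)^2*ω^3*(inner ℂ τ₂ τ₂ : ℂ) + (-1/18 : ℂ)*((Real.sqrt 2 : ℝ) : ℂ)^2*ω^3*(inner ℂ τ₁ τ₁ : ℂ) + (1/18 : ℂ)*((Real.sqrt 2 : ℝ) : ℂ)^2*ω^4*(inner ℂ τ₂ τ₁ : ℂ) + (1/18 : ℂ)*((Real.sqrt 2 : ℝ) : ℂ)^2*ω^4*(inner ℂ τ₁ τ₂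 : ℂ) + (1/18 : ℂ)*((Real.sqrt 2 : ℝ) : ℂ)^2*ω^5*(inner ℂ τ₂ τ₁ : ℂ) + (1/18 : ℂ)*((Real.sqrt 2 : ℝ) : ℂ)^2*ω^5*(inner ℂ τ₁ τ₂ : ℂ) + (-1/18 : ℂ)*((Real.sqrt 2 : ℝ) : ℂ)^2*ω^6*(inner ℂ τ₂ τ₂ : ℂ) + (-1/18 : ℂ)*((Real.sqrt 2 : ℝ) : ℂ)^2*ω^6*(inner ℂ τ₁ τ₁ : ℂ) + (-1/18 : ℂ)*((Real.sqrt 2 : ℝ) : ℂ)^2*Complex.I^2*(inner ℂ τ₂ τ₁ : ℂ) + (-1/18 : ℂ)*((Real.sqrt 2 : ℝ) : ℂ)^2*Complex.I^2*(inner ℂ τ₁ τ₂ : ℂ) + (1/18 : ℂ)*((Real.sqrt 2 : ℝ) : ℂ)^2*Complex.I^2*(inner ℂ τ₂ τ₂ : ℂ) + (1/18 : ℂ)*((Real.sqrt 2 : ℝ) : ℂ)^2*Complex.I^2*(inner ℂ τ₁ τ₁ : ℂ) + (-1/54 : ℂ)*((Real.sqrt 2 : ℝ) : ℂ)^2*((Real.sqrt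 3 : ℝ) : ℂ)^2*ω^3*(inner ℂ τ₂ τ₂ : ℂ) + (-1/54 : ℂ)*((Real.sqrt 2 : ℝ) : ℂ)^2*((Real.sqrt 3 : ℝ) : ℂ)^2*ω^3*(inner ℂ τ₁ τ₁ : ℂ) + (1/54 : ℂ)*((Real.sqrt 2 : ℝ) : ℂ)^2*((Real.sqrt 3 : ℝ) : ℂ)^2*ω^4*(inner ℂ τ₂ τ₁ : ℂ) + (1/54 : ℂ)*((Real.sqrt 2 : ℝ) : ℂ)^2*((Real.sqrt 3 : ℝ) : ℂ)^2*ω^4*(inner ℂ τ₁ τ₂ : ℂ) + (1/54 : ℂ)*((Real.sqrt 2 : ℝ) : ℂ)^2*((Real.sqrt 3 : ℝ) : ℂ)^2*ω^5*(inner ℂ τ₂ τ₁ : ℂ) + (1/54 : ℂ)*((Real.sqrt 2 : ℝ) : ℂ)^2*((Real.sqrt 3 : ℝ) : ℂ)^2*ω^5*(inner ℂ τ₁ τ₂ : ℂ) + (-1/54 : ℂ)*((Real.sqrt 2 : ℝ) : ℂ)^2*((Real.sqrt 3 : ℝ) : ℂ)^2*ω^6*(inner ℂ τ₂ τ₂ :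 ℂ) + (-1/54 : ℂ)*((Real.sqrt 2 : ℝ) : ℂ)^2*((Real.sqrt 3 : ℝ) : ℂ)^2*ω^6*(inner ℂ τ₁ τ₁ : ℂ) + (-1/54 : ℂ)*((Real.sqrt 2 : ℝ) : ℂ)^2*((Real.sqrt 3 : ℝ) : ℂ)^2*Complex.I^2*(inner ℂ τ₂ τ₁ : ℂ) + (-1/54 : ℂ)*((Real.sqrt 2 : ℝ) : ℂ)^2*((Real.sqrt 3 : ℝ) : ℂ)^2*Complex.I^2*(inner ℂ τ₁ τ₂ : ℂ) + (1/54 : ℂ)*((Real.sqrt 2 : ℝ) : ℂ)^2*((Real.sqrt 3 : ℝ) : ℂ)^2*Complex.I^2*(inner ℂ τ₂ τ₂ : ℂ) + (1/54 : ℂ)*((Real.sqrt 2 : ℝ) : ℂ)^2*((Real.sqrt 3 : ℝ) : ℂ)^2*Complex.I^2*(inner ℂ τ₁ τ₁ : ℂ)) * hy3 + ((-1/6 : ℂ)*((Real.sqrt 2 : ℝ) : ℂ)^2*(inner ℂ τ₂ τ₁ : ℂ) + (-1/6 : ℂ)*((Real.sqrt 2 : ℝ) : ℂ)^2*(inner ℂ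 τ₁ τ₂ : ℂ) + (1/6 : ℂ)*((Real.sqrt 2 : ℝ) : ℂ)^2*(inner ℂ τ₂ τ₂ : ℂ) + (1/6 : ℂ)*((Real.sqrt 2 : ℝ) : ℂ)^2*(inner ℂ τ₁ τ₁ : ℂ)) * Complex.I_sq + ((1/6 : ℂ)*((Real.sqrt 2 : ℝ) : ℂ)^2*(inner ℂ τ₂ τ₁ : ℂ) + (1/6 : ℂ)*((Real.sqrt 2 : ℝ) : ℂ)^2*(inner ℂ τ₁ τ₂ : ℂ) + (1/3 : ℂ)*((Real.sqrt 2 : ℝ) : ℂ)^2*(inner ℂ τ₂ τ₂ : ℂ) + (1/3 : ℂ)*((Real.sqrt 2 : ℝ) : ℂ)^2*(inner ℂ τ₁ τ₁ : ℂ) + (-1/6 : ℂ)*((Real.sqrt 2 : ℝ) : ℂ)^2*ω*(inner ℂ τ₂ τ₁ : ℂ) + (-1/6 : ℂ)*((Real.sqrt 2 : ℝ) : ℂ)^2*ω*(inner ℂ τ₁ τ₂ : ℂ) + (-1/3 : ℂ)*((Real.sqrt 2 : ℝ) : ℂ)^2*ω*(inner ℂ τ₂ τ₂ : ℂ) + (-1/3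 : ℂ)*((Real.sqrt 2 : ℝ) : ℂ)^2*ω*(inner ℂ τ₁ τ₁ : ℂ) + (1/6 : ℂ)*((Real.sqrt 2 : ℝ) : ℂ)^2*ω^3*(inner ℂ τ₂ τ₁ : ℂ) + (1/6 : ℂ)*((Real.sqrt 2 : ℝ) : ℂ)^2*ω^3*(inner ℂ τ₁ τ₂ : ℂ) + (1/6 : ℂ)*((Real.sqrt 2 : ℝ) : ℂ)^2*ω^3*(inner ℂ τ₂ τ₂ : ℂ) + (1/6 : ℂ)*((Real.sqrt 2 : ℝ) : ℂ)^2*ω^3*(inner ℂ τ₁ τ₁ : ℂ) + (-1/6 : ℂ)*((Real.sqrt 2 : ℝ) : ℂ)^2*ω^4*(inner ℂ τ₂ τ₂ : ℂ) + (-1/6 : ℂ)*((Real.sqrt 2 : ℝ) : ℂ)^2*ω^4*(inner ℂ τ₁ τ₁ : ℂ)) * hωsum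
  have key2 : (inner ℂ τ₁ τ₁ : ℂ) = (inner ℂ τ₂ τ₂ : ℂ) := by
    linear_combination (-2/3 : ℂ) * ((Real.sqrt 3 : ℝ) : ℂ) * horth + ((1/2 : ℂ)*(inner ℂ τ₂ τ₂ : ℂ) + (-1/2 : ℂ)*(inner ℂ τ₁ τ₁ : ℂ)) * hx2 + ((-1/9 : ℂ)*((Real.sqrt 2 : ℝ) : ℂ)^2*ω*(inner ℂ τ₀ τ₂ : ℂ) + (1/9 : ℂ)*((Real.sqrt 2 : ℝ) : ℂ)^2*ω*(inner ℂ τ₀ τ₁ : ℂ) + (-1/9 : ℂ)*((Real.sqrt 2 : ℝ) : ℂ)^2*ω^2*(inner ℂ τ₀ τ₂ : ℂ) + (1/9 : ℂ)*((Real.sqrt 2 : ℝ) : ℂ)^2*ω^2*(inner ℂ τ₀ τ₁ : ℂ) + (1/18 : ℂ)*((Real.sqrt 2 : ℝ) : ℂ)^2*ω^3*(inner ℂ τ₂ τ₂ : ℂ) + (-1/18 : ℂ)*((Real.sqrt 2 : ℝ) : ℂ)^2*ω^3*(inner ℂ τ₁ τ₁ : ℂ) + (-1/18 : ℂ)*((Real.sqrt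 2 : ℝ) : ℂ)^2*ω^4*(inner ℂ τ₂ τ₁ : ℂ) + (1/18 : ℂ)*((Real.sqrt 2 : ℝ) : ℂ)^2*ω^4*(inner ℂ τ₁ τ₂ : ℂ) + (-1/18 : ℂ)*((Real.sqrt 2 : ℝ) : ℂ)^2*ω^5*(inner ℂ τ₂ τ₁ : ℂ) + (1/18 : ℂ)*((Real.sqrt 2 : ℝ) : ℂ)^2*ω^5*(inner ℂ τ₁ τ₂ : ℂ) + (1/18 : ℂ)*((Real.sqrt 2 : ℝ) : ℂ)^2*ω^6*(inner ℂ τ₂ τ₂ : ℂ) + (-1/18 : ℂ)*((Real.sqrt 2 : ℝ) : ℂ)^2*ω^6*(inner ℂ τ₁ τ₁ : ℂ) + (1/9 : ℂ)*((Real.sqrt 2 : ℝ) : ℂ)^2*Complex.I^2*(inner ℂ τ₀ τ₂ : ℂ) + (-1/9 : ℂ)*((Real.sqrt 2 : ℝ) : ℂ)^2*Complex.I^2*(inner ℂ τ₀ τ₁ : ℂ) + (1/18 : ℂ)*((Real.sqrt 2 : ℝ) : ℂ)^2*Complex.I^2*(inner ℂ τ₂ τ₁ : ℂ) + (-1/18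 : ℂ)*((Real.sqrt 2 : ℝ) : ℂ)^2*Complex.I^2*(inner ℂ τ₁ τ₂ : ℂ) + (-1/18 : ℂ)*((Real.sqrt 2 : ℝ) : ℂ)^2*Complex.I^2*(inner ℂ τ₂ τ₂ : ℂ) + (1/18 : ℂ)*((Real.sqrt 2 : ℝ) : ℂ)^2*Complex.I^2*(inner ℂ τ₁ τ₁ : ℂ) + (-1/27 : ℂ)*((Real.sqrt 2 : ℝ) : ℂ)^2*((Real.sqrt 3 : ℝ) : ℂ)^2*ω*(inner ℂ τ₀ τ₂ : ℂ) + (1/27 : ℂ)*((Real.sqrt 2 : ℝ) : ℂ)^2*((Real.sqrt 3 : ℝ) : ℂ)^2*ω*(inner ℂ τ₀ τ₁ : ℂ) + (-1/27 : ℂ)*((Real.sqrt 2 : ℝ) : ℂ)^2*((Real.sqrt 3 : ℝ) : ℂ)^2*ω^2*(inner ℂ τ₀ τ₂ : ℂ) + (1/27 : ℂ)*((Real.sqrt 2 : ℝ) : ℂ)^2*((Real.sqrt 3 : ℝ) : ℂ)^2*ω^2*(inner ℂ τ₀ τ₁ : ℂ) + (1/54 : ℂ)*((Real.sqrt 2 :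 ℝ) : ℂ)^2*((Real.sqrt 3 : ℝ) : ℂ)^2*ω^3*(inner ℂ τ₂ τ₂ : ℂ) + (-1/54 : ℂ)*((Real.sqrt 2 : ℝ) : ℂ)^2*((Real.sqrt 3 : ℝ) : ℂ)^2*ω^3*(inner ℂ τ₁ τ₁ : ℂ) + (-1/54 : ℂ)*((Real.sqrt 2 : ℝ) : ℂ)^2*((Real.sqrt 3 : ℝ) : ℂ)^2*ω^4*(inner ℂ τ₂ τ₁ : ℂ) + (1/54 : ℂ)*((Real.sqrt 2 : ℝ) : ℂ)^2*((Real.sqrt 3 : ℝ) : ℂ)^2*ω^4*(inner ℂ τ₁ τ₂ : ℂ) + (-1/54 : ℂ)*((Real.sqrt 2 : ℝ) : ℂ)^2*((Real.sqrt 3 : ℝ) : ℂ)^2*ω^5*(inner ℂ τ₂ τ₁ : ℂ) + (1/54 : ℂ)*((Real.sqrt 2 : ℝ) : ℂ)^2*((Real.sqrt 3 : ℝ) : ℂ)^2*ω^5*(inner ℂ τ₁ τ₂ : ℂ) + (1/54 : ℂ)*((Real.sqrt 2 : ℝ) : ℂ)^2*((Real.sqrt 3 : ℝ) : ℂ)^2*ω^6*(inner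 ℂ τ₂ τ₂ : ℂ) + (-1/54 : ℂ)*((Real.sqrt 2 : ℝ) : ℂ)^2*((Real.sqrt 3 : ℝ) : ℂ)^2*ω^6*(inner ℂ τ₁ τ₁ : ℂ) + (1/27 : ℂ)*((Real.sqrt 2 : ℝ) : ℂ)^2*((Real.sqrt 3 : ℝ) : ℂ)^2*Complex.I^2*(inner ℂ τ₀ τ₂ : ℂ) + (-1/27 : ℂ)*((Real.sqrt 2 : ℝ) : ℂ)^2*((Real.sqrt 3 : ℝ) : ℂ)^2*Complex.I^2*(inner ℂ τ₀ τ₁ : ℂ) + (1/54 : ℂ)*((Real.sqrt 2 : ℝ) : ℂ)^2*((Real.sqrt 3 : ℝ) : ℂ)^2*Complex.I^2*(inner ℂ τ₂ τ₁ : ℂ) + (-1/54 : ℂ)*((Real.sqrt 2 : ℝ) : ℂ)^2*((Real.sqrt 3 : ℝ) : ℂ)^2*Complex.I^2*(inner ℂ τ₁ τ₂ : ℂ) + (-1/54 : ℂ)*((Real.sqrt 2 : ℝ) : ℂ)^2*((Real.sqrt 3 : ℝ) : ℂ)^2*Complex.I^2*(inner ℂ τ₂ τ₂ : ℂ) + (1/54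 : ℂ)*((Real.sqrt 2 : ℝ) : ℂ)^2*((Real.sqrt 3 : ℝ) : ℂ)^2*Complex.I^2*(inner ℂ τ₁ τ₁ : ℂ)) * hy3 + ((1/3 : ℂ)*((Real.sqrt 2 : ℝ) : ℂ)^2*(inner ℂ τ₀ τ₂ : ℂ) + (-1/3 : ℂ)*((Real.sqrt 2 : ℝ) : ℂ)^2*(inner ℂ τ₀ τ₁ : ℂ) + (1/6 : ℂ)*((Real.sqrt 2 : ℝ) : ℂ)^2*(inner ℂ τ₂ τ₁ : ℂ) + (-1/6 : ℂ)*((Real.sqrt 2 : ℝ) : ℂ)^2*(inner ℂ τ₁ τ₂ : ℂ) + (-1/6 : ℂ)*((Real.sqrt 2 : ℝ) : ℂ)^2*(inner ℂ τ₂ τ₂ : ℂ) + (1/6 : ℂ)*((Real.sqrt 2 : ℝ) : ℂ)^2*(inner ℂ τ₁ τ₁ : ℂ)) * Complex.I_sq + ((-1/3 : ℂ)*((Real.sqrt 2 : ℝ) : ℂ)^2*(inner ℂ τ₀ τ₂ : ℂ) + (1/3 : ℂ)*((Real.sqrt 2 : ℝ) : ℂ)^2*(inner ℂ τ₀ τ₁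 : ℂ) + (-1/6 : ℂ)*((Real.sqrt 2 : ℝ) : ℂ)^2*(inner ℂ τ₂ τ₁ : ℂ) + (1/6 : ℂ)*((Real.sqrt 2 : ℝ) : ℂ)^2*(inner ℂ τ₁ τ₂ : ℂ) + (-1/3 : ℂ)*((Real.sqrt 2 : ℝ) : ℂ)^2*(inner ℂ τ₂ τ₂ : ℂ) + (1/3 : ℂ)*((Real.sqrt 2 : ℝ) : ℂ)^2*(inner ℂ τ₁ τ₁ : ℂ) + (1/6 : ℂ)*((Real.sqrt 2 : ℝ) : ℂ)^2*ω*(inner ℂ τ₂ τ₁ : ℂ) + (-1/6 : ℂ)*((Real.sqrt 2 : ℝ) : ℂ)^2*ω*(inner ℂ τ₁ τ₂ : ℂ) + (1/3 : ℂ)*((Real.sqrt 2 : ℝ) : ℂ)^2*ω*(inner ℂ τ₂ τ₂ : ℂ) + (-1/3 : ℂ)*((Real.sqrt 2 : ℝ) : ℂ)^2*ω*(inner ℂ τ₁ τ₁ : ℂ) + (-1/6 : ℂ)*((Real.sqrt 2 : ℝ) : ℂ)^2*ω^3*(inner ℂ τ₂ τ₁ : ℂ) + (1/6 : ℂ)*((Real.sqrt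 2 : ℝ) : ℂ)^2*ω^3*(inner ℂ τ₁ τ₂ : ℂ) + (-1/6 : ℂ)*((Real.sqrt 2 : ℝ) : ℂ)^2*ω^3*(inner ℂ τ₂ τ₂ : ℂ) + (1/6 : ℂ)*((Real.sqrt 2 : ℝ) : ℂ)^2*ω^3*(inner ℂ τ₁ τ₁ : ℂ) + (1/6 : ℂ)*((Real.sqrt 2 : ℝ) : ℂ)^2*ω^4*(inner ℂ τ₂ τ₂ : ℂ) + (-1/6 : ℂ)*((Real.sqrt 2 : ℝ) : ℂ)^2*ω^4*(inner ℂ τ₁ τ₁ : ℂ)) * hωsum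
  refine ⟨?_, ?_, ?_⟩
  · linear_combination hnorm - key1
  · linear_combination key1 / 2 + key2 / 2
  · linear_combination key1 / 2 - key2 / 2
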